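/- If J : ℝ → ℝ is nonnegative, even, supported in (-d,d), integrates to 1, and is nonincreasing on [0,∞), and 0 < a₀ < a with d, a₀ given, then for any b⁺, b⁻ ≥ 0 there exists k > 0 such that the function S̄ defined by S̄(x) = k + max(b⁺x, -b⁻x) for x ∉ (-a₀,a₀) and S̄(x) = 0 for x ∈ (-a₀,a₀) satisfies (J * S̄)(x) - S̄(x) ≤ 0 for all x with |x| ≥ a₀. -/

import Mathlib

open Real MeasureTheory Set

private lemma J_meas (J : ℝ → ℝ) (hJeven : ∀ x, J (-x) = J x)
    (hJmono : AntitoneOn J (Set.Ici 0)) : Measurable J := by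
  have h1 : Antitone (fun u : ℝ => J (max u 0)) := by
    intro u v huv
    exact hJmono (le_max_right u 0) (le_max_right v 0) (max_le_max huv le_rfl)
  have h2 : J = fun x => (fun u : ℝ => J (max u 0)) |x| := by
    funext x
    rcases le_or_gt 0 x with hx | hx
    · simp only [abs_of_nonneg hx, max_eq_left hx]
    · simp only [abs_of_neg hx, max_eq_left (by linarith : (0:ℝ) ≤ -x), hJeven]
  rw [h2]
  exact h1.measurable.comp measurable_abs

private lemma aux_half (J : ℝ → ℝ) (d a₀ : ℝ) (hd : 0 < d)
    (hJpos : ∀ x, 0 ≤ J x) (hJeven : ∀ x, J (-x) = J x)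
    (hJsupp : ∀ x, d ≤ |x| → J x = 0)
    (hJint : ∫ x, J x = 1)
    (hJmono : AntitoneOn J (Set.Ici 0))
    (ha₀ : 0 < a₀)
    (bp bm k : ℝ) (hbp : 0 ≤ bp) (hbm : 0 ≤ bm)
    (hk1 : bp * d ≤ k)
    (hk2 : (bp + bm) * d ^ 2 ≤ 2 * a₀ * (k - bp * d))
    (x : ℝ) (hx : a₀ ≤ x) :
    (∫ y, J (x - y) * (if |y| < a₀ then 0 else k + max (bp * y) (-bm * y)))
      ≤ k + bp * x := by
  have hJmeas : Measurable J := J_meas J hJeven hJmono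
  have hJInt : Integrable J := by
    by_contra h
    rw [integral_undef h] at hJint
    norm_num at hJint
  have hk0 : 0 ≤ k := le_trans (mul_nonneg hbp hd.le) hk1
  have hx0 : 0 < x := lt_of_lt_of_le ha₀ hx
  have hJx : Integrable (fun y => J (x - y)) := hJInt.comp_sub_left x
  have hJxmeas : Measurable (fun y => J (x - y)) :=
    hJmeas.comp (measurable_const.sub measurable_id)
  -- J(x - y) = J(y - x)
  have hflip : ∀ y : ℝ, J (x - y) = J (y - x) := by
    intro y
    rw [show x - y = -(y - x) by ring, hJeven]
  -- ∫ J(x-y) dy = 1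
  have hconv1 : (∫ y, J (x - y)) = 1 := by
    calc (∫ y, J (x - y)) = ∫ y, J (y - x) := by simp_rw [hflip]
    _ = ∫ y, J y := integral_sub_right_eq_self J x
    _ = 1 := hJint
  -- integrability of z ↦ J z * z
  have hzJ_int : Integrable (fun z => J z * z) := by
    refine (hJInt.mul_const d).mono ((hJmeas.mul measurable_id).aestronglyMeasurable)
      (Filter.Eventually.of_forall fun z => ?_)
    rcases le_or_gt d |z| with h | h
    · rw [hJsupp z h]; simp
    · simp only [Real.norm_eq_abs, abs_mul]
      apply mul_le_mul_of_nonneg_left _ (abs_nonneg _)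
      rw [abs_of_pos hd]
      exact h.le
  have hzJ_odd : (∫ z, J z * z) = 0 := by
    have h1 : (∫ z, J (-z) * (-z)) = ∫ z, J z * z :=
      integral_neg_eq_self (fun z => J z * z) volume
    have h2 : (∫ z, J (-z) * (-z)) = ∫ z, -(J z * z) := by
      congr 1; funext z; rw [hJeven]; ring
    rw [h2, integral_neg] at h1
    linarith
  -- Integrable (fun y => J (x - y) * (y - x)) and its integral is 0
  have hInt2 : Integrable (fun y => J (x - y) * (y - x)) := by
    have e : (fun y => J (x - y) * (y - x)) = fun y => (fun z => J z * z) (y - x) := by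
      funext y; simp only [hflip y]
    rw [e]
    exact hzJ_int.comp_sub_right x
  have hconv2 : (∫ y, J (x - y) * (y - x)) = 0 := by
    have e : (fun y => J (x - y) * (y - x)) = fun y => (fun z => J z * z) (y - x) := by
      funext y; simp only [hflip y]
    rw [e, integral_sub_right_eq_self (fun z => J z * z) x, hzJ_odd]
  -- Integrable A where A y = J(x-y) * (k + bp * y)
  have hA_int : Integrable (fun y => J (x - y) * (k + bp * y)) := by
    refine (hJx.mul_const (k + bp * (x + d))).mono
      ((hJxmeas.mul (measurable_const.add (measurable_const.mul measurable_id))).aestronglyMeasurable)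
      (Filter.Eventually.of_forall fun y => ?_)
    rcases le_or_gt d |x - y| with h | h
    · rw [hJsupp _ h]; simp
    · obtain ⟨h1, h2⟩ := abs_lt.mp h
      simp only [Real.norm_eq_abs, abs_mul]
      apply mul_le_mul_of_nonneg_left _ (abs_nonneg _)
      have hb1 : bp * y ≤ bp * (x + d) :=
        mul_le_mul_of_nonneg_left (by linarith) hbp
      have hb2 : bp * (-(x + d)) ≤ bp * y :=
        mul_le_mul_of_nonneg_left (by linarith) hbp
      rw [abs_of_nonneg (by nlinarith : (0:ℝ) ≤ k + bp * (x + d))]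
      rw [abs_le]
      constructor <;> nlinarith
  -- ∫ A = k + bp * x
  have hA : (∫ y, J (x - y) * (k + bp * y)) = k + bp * x := by
    have e : (fun y => J (x - y) * (k + bp * y))
        = fun y => k * J (x - y) + (bp * (J (x - y) * (y - x)) + (bp * x) * J (x - y)) := by
      funext y; ring
    have hg' : Integrable (fun y => bp * (J (x - y) * (y - x)) + bp * x * J (x - y)) :=
      (hInt2.const_mul bp).add (hJx.const_mul (bp * x))
    rw [e, integral_add (hJx.const_mul k) hg',
      integral_add (hInt2.const_mul bp) (hJx.const_mul (bp * x)),
      integral_const_mul, integral_const_mul, integral_const_mul, hconv1, hconv2]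
    ring
  -- indicator functions
  have hind1_int : Integrable ((Ioc (x - d) (-a₀)).indicator
      (fun _ => (bp + bm) * d * J (x + a₀))) := by
    refine IntegrableOn.integrable_indicator ?_ measurableSet_Ioc
    refine (integrableOn_const_iff).mpr (Or.inr ?_)
    rw [Real.volume_Ioc]
    exact ENNReal.ofReal_lt_top
  have hind2_int : Integrable ((Ioo (-a₀) a₀).indicator
      (fun _ => (k - bp * d) * J (x + a₀))) := by
    refine IntegrableOn.integrable_indicator ?_ measurableSet_Ioo
    refine (integrableOn_const_iff).mpr (Or.inr ?_)
    rw [Real.volume_Ioo]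
    exact ENNReal.ofReal_lt_top
  -- pointwise bound
  have hpt : ∀ y, J (x - y) * (if |y| < a₀ then 0 else k + max (bp * y) (-bm * y)) ≤
      J (x - y) * (k + bp * y)
        + (Ioc (x - d) (-a₀)).indicator (fun _ => (bp + bm) * d * J (x + a₀)) y
        - (Ioo (-a₀) a₀).indicator (fun _ => (k - bp * d) * J (x + a₀)) y := by
    intro y
    have hJxy := hJpos (x - y)
    have hJxa := hJpos (x + a₀)
    by_cases h1 : |y| < a₀
    · obtain ⟨hy1, hy2⟩ := abs_lt.mp h1
      have hn1 : y ∉ Ioc (x - d) (-a₀) := by intro hm; linarith [hm.2]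
      rw [if_pos h1, indicator_of_notMem hn1,
        indicator_of_mem (show y ∈ Ioo (-a₀) a₀ from ⟨hy1, hy2⟩)]
      have hxy0 : (0:ℝ) ≤ x - y := by linarith
      have hle : J (x + a₀) ≤ J (x - y) :=
        hJmono (mem_Ici.mpr hxy0) (mem_Ici.mpr (by linarith)) (by linarith)
      rcases eq_or_lt_of_le hJxy with hz | hz
      · have hz2 : J (x + a₀) = 0 := le_antisymm (by linarith) hJxa
        rw [← hz, hz2]
        simp
      · have hxd : x - y < d := by
          by_contra hcon
          push_neg at hcon
          have := hJsupp (x - y) (by rwa [abs_of_nonneg hxy0])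
          linarith
        have h2 : k - bp * d ≤ k + bp * y := by nlinarith
        have h3 : (k - bp * d) * J (x + a₀) ≤ (k + bp * y) * J (x - y) :=
          mul_le_mul h2 hle hJxa (le_trans (by linarith) h2)
        have hr : (k + bp * y) * J (x - y) = J (x - y) * (k + bp * y) := by ring
        linarith
    · rw [if_neg h1]
      push_neg at h1
      rcases le_or_gt 0 y with hy0 | hy0
      · have hya : a₀ ≤ y := by rwa [abs_of_nonneg hy0] at h1
        have hmax : max (bp * y) (-bm * y) = bp * y := max_eq_left (by nlinarith)
        have hn1 : y ∉ Ioc (x - d) (-a₀) := by intro hm; linarith [hm.2]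
        have hn2 : y ∉ Ioo (-a₀) a₀ := by intro hm; linarith [hm.2]
        rw [hmax, indicator_of_notMem hn1, indicator_of_notMem hn2]
        linarith
      · have hya : y ≤ -a₀ := by
          rw [abs_of_neg hy0] at h1; linarith
        have hmax : max (bp * y) (-bm * y) = -bm * y := max_eq_right (by nlinarith)
        have hn2 : y ∉ Ioo (-a₀) a₀ := by intro hm; linarith [hm.1]
        rw [hmax, indicator_of_notMem hn2]
        by_cases h3 : x - d < y
        · rw [indicator_of_mem (show y ∈ Ioc (x - d) (-a₀) from ⟨h3, hya⟩)]
          have hle : J (x - y) ≤ J (x + a₀) :=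
            hJmono (mem_Ici.mpr (by linarith)) (mem_Ici.mpr (by linarith)) (by linarith)
          have h4 : (bp + bm) * (-y) ≤ (bp + bm) * d :=
            mul_le_mul_of_nonneg_left (by linarith) (by linarith)
          have h5 : (bp + bm) * (-y) * J (x - y) ≤ (bp + bm) * d * J (x + a₀) :=
            mul_le_mul h4 hle hJxy (mul_nonneg (by linarith) hd.le)
          have hr : J (x - y) * (k + -bm * y) - J (x - y) * (k + bp * y)
              = (bp + bm) * (-y) * J (x - y) := by ring
          linarith
        · push_neg at h3
          have hz : J (x - y) = 0 :=
            hJsupp _ (by rw [abs_of_nonneg (by linarith)]; linarith)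
          have hn1 : y ∉ Ioc (x - d) (-a₀) := by intro hm; linarith [hm.1]
          rw [indicator_of_notMem hn1, hz]
          simp
  -- nonnegativity of the integrand
  have hnn : ∀ y, 0 ≤ J (x - y) * (if |y| < a₀ then 0 else k + max (bp * y) (-bm * y)) := by
    intro y
    apply mul_nonneg (hJpos _)
    split
    · exact le_refl 0
    · have : 0 ≤ max (bp * y) (-bm * y) := by
        rcases le_or_gt 0 y with h | h
        · exact le_max_of_le_left (mul_nonneg hbp h)
        · exact le_max_of_le_right (by nlinarith)
      linarith
  -- integrate
  have hRHS_int : Integrable (fun y => J (x - y) * (k + bp * y)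
        + (Ioc (x - d) (-a₀)).indicator (fun _ => (bp + bm) * d * J (x + a₀)) y
        - (Ioo (-a₀) a₀).indicator (fun _ => (k - bp * d) * J (x + a₀)) y) :=
    (hA_int.add hind1_int).sub hind2_int
  have hmain : (∫ y, J (x - y) * (if |y| < a₀ then 0 else k + max (bp * y) (-bm * y)))
      ≤ ∫ y, (J (x - y) * (k + bp * y)
        + (Ioc (x - d) (-a₀)).indicator (fun _ => (bp + bm) * d * J (x + a₀)) y
        - (Ioo (-a₀) a₀).indicator (fun _ => (k - bp * d) * J (x + a₀)) y) :=
    integral_mono_of_nonneg (Filter.Eventually.of_forall hnn) hRHS_int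
      (Filter.Eventually.of_forall hpt)
  have hcalc : (∫ y, (J (x - y) * (k + bp * y)
        + (Ioc (x - d) (-a₀)).indicator (fun _ => (bp + bm) * d * J (x + a₀)) y
        - (Ioo (-a₀) a₀).indicator (fun _ => (k - bp * d) * J (x + a₀)) y))
      = (k + bp * x)
        + (volume (Ioc (x - d) (-a₀))).toReal * ((bp + bm) * d * J (x + a₀))
        - (2 * a₀) * ((k - bp * d) * J (x + a₀)) := by
    have hsum_int : Integrable (fun y => J (x - y) * (k + bp * y)
        + (Ioc (x - d) (-a₀)).indicator (fun _ => (bp + bm) * d * J (x + a₀)) y) :=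
      hA_int.add hind1_int
    rw [integral_sub hsum_int hind2_int,
      integral_add hA_int hind1_int, hA,
      integral_indicator_const _ measurableSet_Ioc,
      integral_indicator_const _ measurableSet_Ioo,
      smul_eq_mul, smul_eq_mul, measureReal_def, measureReal_def, Real.volume_Ioo,
      ENNReal.toReal_ofReal (by linarith : (0:ℝ) ≤ a₀ - -a₀)]
    ring
  -- bound the measure term
  have hm1 : (volume (Ioc (x - d) (-a₀))).toReal ≤ d := by
    rw [Real.volume_Ioc]
    rcases le_or_gt (-a₀ - (x - d)) 0 with h | h
    · rw [ENNReal.ofReal_eq_zero.mpr h]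
      simpa using hd.le
    · rw [ENNReal.toReal_ofReal h.le]
      linarith
  have hm0 : 0 ≤ (volume (Ioc (x - d) (-a₀))).toReal := ENNReal.toReal_nonneg
  have hc1 : 0 ≤ (bp + bm) * d * J (x + a₀) :=
    mul_nonneg (mul_nonneg (by linarith) hd.le) (hJpos _)
  have h5 : (volume (Ioc (x - d) (-a₀))).toReal * ((bp + bm) * d * J (x + a₀))
      ≤ d * ((bp + bm) * d * J (x + a₀)) := mul_le_mul_of_nonneg_right hm1 hc1
  have h6 : (bp + bm) * d ^ 2 * J (x + a₀) ≤ 2 * a₀ * (k - bp * d) * J (x + a₀) :=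
    mul_le_mul_of_nonneg_right hk2 (hJpos _)
  have h7 : d * ((bp + bm) * d * J (x + a₀)) = (bp + bm) * d ^ 2 * J (x + a₀) := by ring
  have h8 : 2 * a₀ * (k - bp * d) * J (x + a₀) = 2 * a₀ * ((k - bp * d) * J (x + a₀)) := by
    ring
  linarith [hmain, h5, h6]

theorem supersolution_exists
    (J : ℝ → ℝ) (d a₀ a : ℝ) (hd : 0 < d)
    (hJpos : ∀ x, 0 ≤ J x) (hJeven : ∀ x, J (-x) = J x)
    (hJsupp : ∀ x, d ≤ |x| → J x = 0)
    (hJint : ∫ x, J x = 1)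
    (hJmono : AntitoneOn J (Set.Ici 0))
    (ha₀ : 0 < a₀) (ha : a₀ < a)
    (bp bm : ℝ) (hbp : 0 ≤ bp) (hbm : 0 ≤ bm) :
    ∃ k > 0, ∀ x : ℝ, a₀ ≤ |x| →
      (∫ y, J (x - y) *
          (if |y| < a₀ then 0 else k + max (bp * y) (-bm * y))) -
        (k + max (bp * x) (-bm * x)) ≤ 0 := by
  set k : ℝ := (bp + bm) * d + (bp + bm) * d ^ 2 / a₀ + 1 with hk_def
  have hkpos : 0 < k := by positivity
  have hQ : a₀ * ((bp + bm) * d ^ 2 / a₀) = (bp + bm) * d ^ 2 := by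
    field_simp
  have hd2 : 0 ≤ (bp + bm) * d ^ 2 := by positivity
  have hk1p : bp * d ≤ k := by
    rw [hk_def]
    nlinarith [mul_nonneg hbm hd.le, div_nonneg hd2 ha₀.le]
  have hk1m : bm * d ≤ k := by
    rw [hk_def]
    nlinarith [mul_nonneg hbp hd.le, div_nonneg hd2 ha₀.le]
  have hk2p : (bp + bm) * d ^ 2 ≤ 2 * a₀ * (k - bp * d) := by
    rw [hk_def]
    nlinarith [mul_nonneg (mul_nonneg ha₀.le hbm) hd.le, hQ, hd2, ha₀]
  have hk2m : (bm + bp) * d ^ 2 ≤ 2 * a₀ * (k - bm * d) := by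
    rw [hk_def]
    nlinarith [mul_nonneg (mul_nonneg ha₀.le hbp) hd.le, hQ, hd2, ha₀]
  refine ⟨k, hkpos, fun x hx => ?_⟩
  rcases le_or_gt 0 x with h0 | h0
  · have hx' : a₀ ≤ x := by rwa [abs_of_nonneg h0] at hx
    have hmax : max (bp * x) (-bm * x) = bp * x := max_eq_left (by nlinarith)
    have := aux_half J d a₀ hd hJpos hJeven hJsupp hJint hJmono ha₀
      bp bm k hbp hbm hk1p hk2p x hx'
    rw [hmax]
    linarith
  · have hx' : a₀ ≤ -x := by rw [abs_of_neg h0] at hx; linarith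
    have haux := aux_half J d a₀ hd hJpos hJeven hJsupp hJint hJmono ha₀
      bm bp k hbm hbp hk1m hk2m (-x) hx'
    have hfe : ∀ y : ℝ, J (x - -y) * (if |(-y)| < a₀ then 0 else k + max (bp * -y) (-bm * -y))
        = J (-x - y) * (if |y| < a₀ then 0 else k + max (bm * y) (-bp * y)) := by
      intro y
      rw [abs_neg, show x - -y = -(-x - y) by ring, hJeven]
      congr 2
      rw [max_comm]
      congr 1 <;> ring
    have heq : (∫ y, J (-x - y) * (if |y| < a₀ then 0 else k + max (bm * y) (-bp * y)))
        = ∫ y, J (x - y) * (if |y| < a₀ then 0 else k + max (bp * y) (-bm * y)) := by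
      rw [← integral_neg_eq_self
        (fun y => J (x - y) * (if |y| < a₀ then 0 else k + max (bp * y) (-bm * y))) volume]
      exact integral_congr_ae (Filter.Eventually.of_forall fun y => (hfe y).symm)
    have hmax : max (bp * x) (-bm * x) = bm * -x := by
      rw [max_eq_right (by nlinarith)]; ring
    rw [hmax, ← heq]
    linarith
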